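/- Let M ∈ ℝ^{n×n} be symmetric with at least two distinct eigenvalues, let λ₁ be its largest eigenvalue, X₁ = {v : Mv = λ₁v} its eigenspace, and δ₁ = min{|λ₁ − λ| : λ an eigenvalue of M, λ ≠ λ₁}. Let x be a unit vector with μ = xᵀMx and ε = ‖Mx − μx‖₂, and assume |μ − λ₁| < |μ − λ| for every eigenvalue λ ≠ λ₁ of M. Then there exists a unit vector v ∈ X₁ with ‖x − v‖₂ ≤ √8 · ε/δ₁. -/

import Mathlib

open Matrix

/-- Euclidean 2-norm of a finitely-indexed real vector. -/
noncomputable def enorm2 {ι : Type*} [Fintype ι] (x : ι → ℝ) : ℝ :=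
  Real.sqrt (∑ i, x i ^ 2)

/-- The set of eigenvalues (the spectrum) of a real matrix. -/
def matSpectrum {n : ℕ} (M : Matrix (Fin n) (Fin n) ℝ) : Set ℝ :=
  {lam : ℝ | ∃ w : Fin n → ℝ, w ≠ 0 ∧ M.mulVec w = lam • w}

lemma combo_dot {n : ℕ} {u : Fin n → Fin n → ℝ}
    (ortho : ∀ i k, ∑ j, u i j * u k j = if i = k then (1:ℝ) else 0)
    (d e : Fin n → ℝ) :
    ∑ j, (∑ i, d i * u i j) * (∑ i, e i * u i j) = ∑ i, d i * e i := by
  have : ∀ j, (∑ i, d i * u i j) * (∑ i, e i * u i j)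
      = ∑ i, ∑ k, d i * e k * (u i j * u k j) := by
    intro j
    rw [Finset.sum_mul_sum]
    exact Finset.sum_congr rfl fun i _ => Finset.sum_congr rfl fun k _ => by ring
  simp_rw [this]
  rw [Finset.sum_comm]
  refine Finset.sum_congr rfl fun i _ => ?_
  rw [Finset.sum_comm]
  simp_rw [← Finset.mul_sum, ortho]
  simp [Finset.sum_ite_eq', mul_ite]

lemma combo_norm {n : ℕ} {u : Fin n → Fin n → ℝ}
    (ortho : ∀ i k, ∑ j, u i j * u k j = if i = k then (1:ℝ) else 0)
    (d : Fin n → ℝ) :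
    ∑ j, (∑ i, d i * u i j) ^ 2 = ∑ i, d i ^ 2 := by
  calc ∑ j, (∑ i, d i * u i j) ^ 2
      = ∑ j, (∑ i, d i * u i j) * (∑ i, d i * u i j) :=
        Finset.sum_congr rfl fun j _ => pow_two _
    _ = ∑ i, d i * d i := combo_dot ortho d d
    _ = ∑ i, d i ^ 2 := Finset.sum_congr rfl fun i _ => (pow_two _).symm

lemma expand_coeff {n : ℕ} {u : Fin n → Fin n → ℝ}
    (complete : ∀ j l, ∑ i, u i j * u i l = if j = l then (1:ℝ) else 0)
    (w : Fin n → ℝ) (j : Fin n) :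
    ∑ i, (∑ l, u i l * w l) * u i j = w j := by
  have : ∀ i, (∑ l, u i l * w l) * u i j = ∑ l, w l * (u i j * u i l) := by
    intro i
    rw [Finset.sum_mul]
    exact Finset.sum_congr rfl fun l _ => by ring
  simp_rw [this]
  rw [Finset.sum_comm]
  simp_rw [← Finset.mul_sum, complete]
  simp [Finset.sum_ite_eq', mul_ite]

lemma coeff_of_combo {n : ℕ} {u : Fin n → Fin n → ℝ}
    (ortho : ∀ i k, ∑ j, u i j * u k j = if i = k then (1:ℝ) else 0)
    (d : Fin n → ℝ) (k : Fin n) :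
    ∑ j, u k j * (∑ i, d i * u i j) = d k := by
  have : ∀ j, u k j * (∑ i, d i * u i j) = ∑ i, d i * (u k j * u i j) := by
    intro j
    rw [Finset.mul_sum]
    exact Finset.sum_congr rfl fun i _ => by ring
  simp_rw [this]
  rw [Finset.sum_comm]
  simp_rw [← Finset.mul_sum, ortho]
  simp

lemma exists_ortho_eigen {n : ℕ} (M : Matrix (Fin n) (Fin n) ℝ) (hM : M.IsSymm) :
    ∃ (u : Fin n → Fin n → ℝ) (lam : Fin n → ℝ),
      (∀ i k, ∑ j, u i j * u k j = if i = k then (1:ℝ) else 0) ∧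
      (∀ j l, ∑ i, u i j * u i l = if j = l then (1:ℝ) else 0) ∧
      (∀ i, M.mulVec (u i) = lam i • u i) := by
  have hH : M.IsHermitian := by rw [Matrix.IsHermitian, Matrix.conjTranspose_eq_transpose_of_trivial]; exact hM
  refine ⟨fun i => ⇑(hH.eigenvectorBasis i), hH.eigenvalues, ?_, ?_, ?_⟩
  · intro i k
    have := orthonormal_iff_ite.mp hH.eigenvectorBasis.orthonormal i k
    simpa [PiLp.inner_apply, mul_comm] using this
  · intro j l
    have h := Matrix.mem_unitaryGroup_iff.mp hH.eigenvectorUnitary.2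
    have := congrFun (congrFun h j) l
    simpa [Matrix.mul_apply, Matrix.one_apply, Matrix.conjTranspose_apply, mul_comm] using this
  · exact hH.mulVec_eigenvectorBasis

lemma mulVec_combo {n : ℕ} {M : Matrix (Fin n) (Fin n) ℝ} {u : Fin n → Fin n → ℝ}
    {lam : Fin n → ℝ} (hMu : ∀ i, M.mulVec (u i) = lam i • u i) (d : Fin n → ℝ) :
    M.mulVec (fun j => ∑ i, d i * u i j) = fun j => ∑ i, (lam i * d i) * u i j := by
  have hfun : (fun j => ∑ i, d i * u i j) = ∑ i, d i • u i := by
    ext j; simp [Finset.sum_apply]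
  rw [hfun, ← M.mulVecLin_apply, map_sum]
  ext j
  simp only [Finset.sum_apply, Matrix.mulVecLin_apply, Matrix.mulVec_smul, hMu,
    Pi.smul_apply, smul_eq_mul]
  exact Finset.sum_congr rfl fun i _ => by ring

lemma final_ineq (t S T ε δ1 : ℝ) (ht0 : 0 ≤ t) (ht1 : t ≤ 1) (ht2 : t ^ 2 = T)
    (hTS : T + S = 1) (hεS : (δ1 / 2) ^ 2 * S ≤ ε ^ 2) (hδpos : 0 < δ1) (hε0 : 0 ≤ ε) :
    2 - 2 * t ≤ (Real.sqrt 8 * ε / δ1) ^ 2 := by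
  have h1 : 2 - 2 * t ≤ 2 * S := by nlinarith [mul_nonneg ht0 (sub_nonneg.mpr ht1)]
  have h2 : δ1 ^ 2 * S ≤ 4 * ε ^ 2 := by nlinarith [hεS]
  have h3 : (Real.sqrt 8) ^ 2 = 8 := Real.sq_sqrt (by norm_num)
  have h4 : (Real.sqrt 8 * ε / δ1) ^ 2 = 8 * ε ^ 2 / δ1 ^ 2 := by
    rw [div_pow, mul_pow, h3]
  rw [h4, le_div_iff₀ (by positivity)]
  nlinarith [mul_le_mul_of_nonneg_right h1 (sq_nonneg δ1)]

/-- For symmetric `M` with at least two distinct eigenvalues,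
largest eigenvalue `λ₁` with eigengap `δ₁`, and a unit vector `x` whose
Rayleigh quotient `μ` is strictly closer to `λ₁` than to any other eigenvalue,
there exists a unit eigenvector `v` for `λ₁` with `‖x − v‖₂ ≤ √8 ε / δ₁`. -/
theorem single_eigenvector_error_bound
    {n : ℕ} (M : Matrix (Fin n) (Fin n) ℝ) (hM : M.IsSymm)
    (lam1 : ℝ) (hlam1 : IsGreatest (matSpectrum M) lam1)
    (htwo : ∃ lam ∈ matSpectrum M, lam ≠ lam1)
    (δ1 : ℝ)
    (hδ1 : IsLeast {r : ℝ | ∃ lam ∈ matSpectrum M, lam ≠ lam1 ∧ r = |lam1 - lam|} δ1)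
    (x : Fin n → ℝ) (hx : enorm2 x = 1)
    (μ : ℝ) (hμ : μ = x ⬝ᵥ M.mulVec x)
    (ε : ℝ) (hε : ε = enorm2 (M.mulVec x - μ • x))
    (hgap : ∀ lam ∈ matSpectrum M, lam ≠ lam1 → |μ - lam1| < |μ - lam|) :
    ∃ v : Fin n → ℝ, M.mulVec v = lam1 • v ∧ enorm2 v = 1 ∧
      enorm2 (x - v) ≤ Real.sqrt 8 * ε / δ1 := by
  classical
  obtain ⟨u, lam, ortho, complete, hMu⟩ := exists_ortho_eigen M hM
  have hu_ne : ∀ i, u i ≠ 0 := by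
    intro i h
    have h1 := ortho i i
    rw [h] at h1
    simp at h1
  have hmem : ∀ i, lam i ∈ matSpectrum M := fun i => ⟨u i, hu_ne i, hMu i⟩
  obtain ⟨lam', hlam'mem, hlam'ne, hδeq⟩ := hδ1.1
  have hδpos : 0 < δ1 := by
    rw [hδeq]
    exact abs_pos.mpr (sub_ne_zero.mpr (Ne.symm hlam'ne))
  have gap2 : ∀ i, lam i ≠ lam1 → δ1 / 2 ≤ |lam i - μ| := by
    intro i hne
    have h1 : δ1 ≤ |lam1 - lam i| := hδ1.2 ⟨lam i, hmem i, hne, rfl⟩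
    have h2 : |μ - lam1| < |μ - lam i| := hgap (lam i) (hmem i) hne
    have h3 : |lam1 - lam i| ≤ |lam1 - μ| + |μ - lam i| := abs_sub_le lam1 μ (lam i)
    rw [abs_sub_comm lam1 μ] at h3
    rw [abs_sub_comm (lam i) μ]
    linarith
  set c : Fin n → ℝ := fun i => ∑ j, u i j * x j with hc
  have hxc : ∀ j, x j = ∑ i, c i * u i j := fun j => (expand_coeff complete x j).symm
  have hxfun : x = fun j => ∑ i, c i * u i j := funext hxc
  have hx2 : ∑ j, x j ^ 2 = 1 := by
    have h0 : (0:ℝ) ≤ ∑ j, x j ^ 2 := Finset.sum_nonneg fun j _ => sq_nonneg _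
    have h1 : Real.sqrt (∑ j, x j ^ 2) = 1 := hx
    rw [← Real.sq_sqrt h0, h1]
    norm_num
  have hsum1 : ∑ i, c i ^ 2 = 1 := by
    rw [← hx2]
    conv_rhs => rw [hxfun]
    exact (combo_norm ortho c).symm
  have hMx : M.mulVec x = fun j => ∑ i, (lam i * c i) * u i j := by
    rw [hxfun]; exact mulVec_combo hMu c
  have hres : M.mulVec x - μ • x = fun j => ∑ i, ((lam i - μ) * c i) * u i j := by
    ext j
    rw [Pi.sub_apply, hMx, Pi.smul_apply, smul_eq_mul, hxc j, Finset.mul_sum,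
      ← Finset.sum_sub_distrib]
    exact Finset.sum_congr rfl fun i _ => by ring
  have hε0 : 0 ≤ ε := by rw [hε]; exact Real.sqrt_nonneg _
  have hε2 : ε ^ 2 = ∑ i, ((lam i - μ) * c i) ^ 2 := by
    rw [hε, enorm2, hres, Real.sq_sqrt (Finset.sum_nonneg fun j _ => sq_nonneg _)]
    exact combo_norm ortho _
  obtain ⟨w, hw0, hww⟩ := hlam1.1
  have hi0 : ∃ i0, lam i0 = lam1 := by
    by_contra hcon
    push_neg at hcon
    set d : Fin n → ℝ := fun i => ∑ j, u i j * w j with hd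
    have hwc : ∀ j, w j = ∑ i, d i * u i j := fun j => (expand_coeff complete w j).symm
    have hwfun : w = fun j => ∑ i, d i * u i j := funext hwc
    have hMw : M.mulVec w = fun j => ∑ i, (lam i * d i) * u i j := by
      rw [hwfun]; exact mulVec_combo hMu d
    have hcoef : ∀ k, lam k * d k = lam1 * d k := by
      intro k
      have h1 : ∑ j, u k j * (M.mulVec w j) = lam k * d k := by
        rw [hMw]; exact coeff_of_combo ortho (fun i => lam i * d i) k
      have h2 : ∑ j, u k j * ((lam1 • w) j) = lam1 * d k := by
        have hform : ∀ j, (lam1 • w) j = ∑ i, (lam1 * d i) * u i j := by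
          intro j
          rw [Pi.smul_apply, smul_eq_mul, hwc j, Finset.mul_sum]
          exact Finset.sum_congr rfl fun i _ => by ring
        simp_rw [hform]
        exact coeff_of_combo ortho (fun i => lam1 * d i) k
      rw [← h1, ← h2, hww]
    have hdz : ∀ k, d k = 0 := by
      intro k
      have h := hcoef k
      have hk := hcon k
      by_contra hdk
      exact hk (by
        have : (lam k - lam1) * d k = 0 := by linarith
        rcases mul_eq_zero.mp this with h' | h'
        · linarith [sub_eq_zero.mp h']
        · exact absurd h' hdk)
    apply hw0
    ext j
    rw [hwc j]
    simp [hdz]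
  obtain ⟨i0, hi0⟩ := hi0
  set T : ℝ := ∑ i, if lam i = lam1 then c i ^ 2 else 0 with hT
  set S : ℝ := ∑ i, if lam i = lam1 then 0 else c i ^ 2 with hS
  have hT0 : 0 ≤ T := Finset.sum_nonneg fun i _ => by positivity
  have hS0 : 0 ≤ S := Finset.sum_nonneg fun i _ => by positivity
  have hTS : T + S = 1 := by
    rw [hT, hS, ← Finset.sum_add_distrib, ← hsum1]
    exact Finset.sum_congr rfl fun i _ => by by_cases h : lam i = lam1 <;> simp [h]
  set t : ℝ := Real.sqrt T with ht
  have ht2 : t ^ 2 = T := Real.sq_sqrt hT0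
  have ht0 : 0 ≤ t := Real.sqrt_nonneg _
  have ht1 : t ≤ 1 := by
    rw [ht, show (1:ℝ) = Real.sqrt 1 by simp]
    exact Real.sqrt_le_sqrt (by linarith)
  have hεS : (δ1 / 2) ^ 2 * S ≤ ε ^ 2 := by
    rw [hε2, hS, Finset.mul_sum]
    refine Finset.sum_le_sum fun i _ => ?_
    by_cases h : lam i = lam1
    · rw [if_pos h, mul_zero]; positivity
    · rw [if_neg h]
      have hg := gap2 i h
      have h1 : (δ1 / 2) ^ 2 ≤ (lam i - μ) ^ 2 := by
        rw [← sq_abs (lam i - μ)]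
        have hh : 0 ≤ δ1 / 2 := by linarith
        nlinarith
      rw [mul_pow]
      nlinarith [sq_nonneg (c i)]
  set a : Fin n → ℝ := fun i =>
    if lam i = lam1 then (if T = 0 then (if i = i0 then 1 else 0) else c i / t) else 0 with ha
  set v : Fin n → ℝ := fun j => ∑ i, a i * u i j with hv
  have htne : T ≠ 0 → t ≠ 0 := by
    intro h hh
    rw [ht] at hh
    exact h (by rw [← ht2, ht, hh]; norm_num)
  have ha_sum : ∑ i, a i ^ 2 = 1 := by
    by_cases hTz : T = 0
    · have hform : ∀ i, a i ^ 2 = if i = i0 then 1 else 0 := by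
        intro i
        by_cases hii : i = i0
        · subst hii; simp [ha, hi0, hTz]
        · by_cases hl : lam i = lam1 <;> simp [ha, hl, hTz, hii]
      simp_rw [hform]
      simp
    · have htn := htne hTz
      have hform : ∀ i, a i ^ 2 = (if lam i = lam1 then c i ^ 2 else 0) / t ^ 2 := by
        intro i
        by_cases hl : lam i = lam1 <;> simp [ha, hl, hTz, div_pow]
      simp_rw [hform]
      rw [← Finset.sum_div, ← hT, ht2, div_self hTz]
  have hac : ∑ i, a i * c i = t := by
    by_cases hTz : T = 0
    · have hsum0 : ∑ i, (if lam i = lam1 then c i ^ 2 else 0) = 0 := by rw [← hT]; exact hTz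
      have hcz : ∀ i, lam i = lam1 → c i = 0 := by
        intro i hl
        have h2 := (Finset.sum_eq_zero_iff_of_nonneg
          (fun k (_ : k ∈ Finset.univ) => by positivity)).mp hsum0 i (Finset.mem_univ i)
        rw [if_pos hl] at h2
        exact pow_eq_zero_iff two_ne_zero |>.mp h2
      have hform : ∀ i, a i * c i = 0 := by
        intro i
        by_cases hl : lam i = lam1
        · rw [hcz i hl]; ring
        · simp [ha, hl]
      simp_rw [hform]
      simp [ht, hTz]
    · have htn := htne hTz
      have hform : ∀ i, a i * c i = (if lam i = lam1 then c i ^ 2 else 0) / t := by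
        intro i
        by_cases hl : lam i = lam1
        · rw [if_pos hl]; simp [ha, hl, hTz]; ring
        · rw [if_neg hl]; simp [ha, hl]
      simp_rw [hform]
      rw [← Finset.sum_div, ← hT, ← ht2, pow_two, mul_div_assoc, div_self htn, mul_one]
  have ha_eig : ∀ i, lam i * a i = lam1 * a i := by
    intro i
    by_cases hl : lam i = lam1
    · rw [hl]
    · simp [ha, hl]
  have hveig : M.mulVec v = lam1 • v := by
    rw [hv, mulVec_combo hMu a]
    ext j
    rw [Pi.smul_apply, smul_eq_mul, Finset.mul_sum]
    simp_rw [ha_eig]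
    exact Finset.sum_congr rfl fun i _ => by ring
  have hvnorm : enorm2 v = 1 := by
    rw [enorm2, hv]
    rw [combo_norm ortho a, ha_sum, Real.sqrt_one]
  have hxv : ∑ j, (x j - v j) ^ 2 = 2 - 2 * t := by
    have hform : ∀ j, x j - v j = ∑ i, (c i - a i) * u i j := by
      intro j
      rw [hxc j, hv, ← Finset.sum_sub_distrib]
      exact Finset.sum_congr rfl fun i _ => by ring
    simp_rw [hform]
    rw [combo_norm ortho]
    have hexp : ∑ i, (c i - a i) ^ 2
        = ∑ i, (c i ^ 2 - 2 * (a i * c i) + a i ^ 2) :=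
      Finset.sum_congr rfl fun i _ => by ring
    rw [hexp, Finset.sum_add_distrib, Finset.sum_sub_distrib, ← Finset.mul_sum,
      hsum1, hac, ha_sum]
    ring
  refine ⟨v, hveig, hvnorm, ?_⟩
  have hbound : 2 - 2 * t ≤ (Real.sqrt 8 * ε / δ1) ^ 2 :=
    final_ineq t S T ε δ1 ht0 ht1 ht2 hTS hεS hδpos hε0
  have hrhs0 : 0 ≤ Real.sqrt 8 * ε / δ1 := by positivity
  have henorm : enorm2 (x - v) = Real.sqrt (2 - 2 * t) := by
    have : ∑ j, (x - v) j ^ 2 = 2 - 2 * t := by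
      simp only [Pi.sub_apply]
      exact hxv
    rw [enorm2, this]
  rw [henorm]
  calc Real.sqrt (2 - 2 * t) ≤ Real.sqrt ((Real.sqrt 8 * ε / δ1) ^ 2) :=
        Real.sqrt_le_sqrt hbound
    _ = Real.sqrt 8 * ε / δ1 := Real.sqrt_sq hrhs0
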